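/- Fix an integer N ≥ 2, and for each P > 0 let φ(P) denote the unique solution in [1,N] of (1+NPφ)^{N-1} = (1+Pφ(N-φ))^N. Then φ is strictly increasing in P. -/

import Mathlib

open Set

-- key inequality 1: s^n - 1 < n (s-1)(s^n+1) for s > 1, n ≥ 1
lemma key1 (n : ℕ) (hn : 1 ≤ n) {s : ℝ} (hs : 1 < s) :
    s ^ n - 1 < (n : ℝ) * (s - 1) * (s ^ n + 1) := by
  have h0 : (0:ℝ) < s - 1 := by linarith
  have hsum : (∑ i ∈ Finset.range n, s ^ i) * (s - 1) = s ^ n - 1 := geom_sum_mul s n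
  have hlt : (∑ i ∈ Finset.range n, s ^ i) < (n : ℝ) * (s ^ n + 1) := by
    calc (∑ i ∈ Finset.range n, s ^ i) < ∑ _i ∈ Finset.range n, (s ^ n + 1) := by
          apply Finset.sum_lt_sum_of_nonempty
          · exact Finset.nonempty_range_iff.mpr (by omega)
          · intro i hi
            have : s ^ i ≤ s ^ n := pow_le_pow_right₀ (le_of_lt hs) (Finset.mem_range.mp hi).le
            linarith
      _ = (n : ℝ) * (s ^ n + 1) := by simp; ring
  calc s ^ n - 1 = (∑ i ∈ Finset.range n, s ^ i) * (s - 1) := hsum.symm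
    _ < (n : ℝ) * (s ^ n + 1) * (s - 1) := by exact mul_lt_mul_of_pos_right hlt h0
    _ = (n : ℝ) * (s - 1) * (s ^ n + 1) := by ring

-- key inequality 2: n (s-1) < s^n - 1 for s > 1, n ≥ 2
lemma key2 (n : ℕ) (hn : 2 ≤ n) {s : ℝ} (hs : 1 < s) :
    (n : ℝ) * (s - 1) < s ^ n - 1 := by
  have h0 : (0:ℝ) < s - 1 := by linarith
  have hsum : (∑ i ∈ Finset.range n, s ^ i) * (s - 1) = s ^ n - 1 := geom_sum_mul s n
  have hlt : (n : ℝ) < ∑ i ∈ Finset.range n, s ^ i := by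
    have : (n : ℝ) = ∑ _i ∈ Finset.range n, (1:ℝ) := by simp
    rw [this]
    apply Finset.sum_lt_sum
    · intro i _; exact one_le_pow₀ hs.le
    · exact ⟨1, Finset.mem_range.mpr (by omega), by simpa using hs⟩
  calc (n : ℝ) * (s - 1) < (∑ i ∈ Finset.range n, s ^ i) * (s - 1) :=
        mul_lt_mul_of_pos_right hlt h0
    _ = s ^ n - 1 := hsum

noncomputable def Pfun (m : ℕ) (s : ℝ) : ℝ :=
  (s ^ (m+2) - 1) ^ 2 / (((m:ℝ)+2) ^ 2 * (s ^ (m+2) - s ^ (m+1)))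

noncomputable def phifun (m : ℕ) (s : ℝ) : ℝ :=
  ((m:ℝ)+2) * (s ^ (m+2) - s ^ (m+1)) / (s ^ (m+2) - 1)

lemma denomP_pos (m : ℕ) {s : ℝ} (hs : 1 < s) :
    0 < ((m:ℝ)+2) ^ 2 * (s ^ (m+2) - s ^ (m+1)) := by
  have h1 : s ^ (m+1) < s ^ (m+2) := pow_lt_pow_right₀ hs (by omega)
  have h2 : (0:ℝ) < ((m:ℝ)+2)^2 := by positivity
  nlinarith

lemma denomphi_pos (m : ℕ) {s : ℝ} (hs : 1 < s) : 0 < s ^ (m+2) - 1 := by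
  have := one_lt_pow₀ hs (n := m+2) (by omega)
  linarith

lemma Pfun_mono (m : ℕ) : StrictMonoOn (Pfun m) (Ioi 1) := by
  apply strictMonoOn_of_deriv_pos (convex_Ioi 1)
  · apply ContinuousOn.div
    · fun_prop
    · fun_prop
    · intro s hs; exact (denomP_pos m hs).ne'
  · intro s hs
    rw [interior_Ioi] at hs
    have hs : (1:ℝ) < s := hs
    have hs0 : (0:ℝ) < s := by linarith
    have hd : 0 < ((m:ℝ)+2) ^ 2 * (s ^ (m+2) - s ^ (m+1)) := denomP_pos m hs
    have hnum : HasDerivAt (fun s : ℝ => (s ^ (m+2) - 1) ^ 2)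
        (2 * (s ^ (m+2) - 1) * (((m:ℝ)+2) * s ^ (m+1))) s := by
      have : HasDerivAt (fun s : ℝ => (s ^ (m+2) - 1) ^ 2) _ s := (((hasDerivAt_pow (m+2) s).sub_const 1).pow 2)
      convert this using 1
      push_cast [Nat.add_sub_cancel]
      ring
    have hden : HasDerivAt (fun s : ℝ => ((m:ℝ)+2) ^ 2 * (s ^ (m+2) - s ^ (m+1)))
        (((m:ℝ)+2) ^ 2 * (((m:ℝ)+2) * s ^ (m+1) - ((m:ℝ)+1) * s ^ m)) s := by
      have : HasDerivAt (fun s : ℝ => ((m:ℝ)+2) ^ 2 * (s ^ (m+2) - s ^ (m+1))) _ s := ((hasDerivAt_pow (m+2) s).sub (hasDerivAt_pow (m+1) s)).const_mul (((m:ℝ)+2)^2)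
      convert this using 1
      push_cast [Nat.add_sub_cancel]
      ring
    have hdiv := hnum.fun_div hden hd.ne'
    rw [show Pfun m = fun s : ℝ => (s ^ (m+2) - 1) ^ 2 / (((m:ℝ)+2) ^ 2 * (s ^ (m+2) - s ^ (m+1))) from rfl,
      hdiv.deriv]
    apply div_pos _ (by positivity)
    have hfact : 2 * (s ^ (m+2) - 1) * (((m:ℝ)+2) * s ^ (m+1)) *
          (((m:ℝ)+2) ^ 2 * (s ^ (m+2) - s ^ (m+1))) -
        (s ^ (m+2) - 1) ^ 2 * (((m:ℝ)+2) ^ 2 * (((m:ℝ)+2) * s ^ (m+1) - ((m:ℝ)+1) * s ^ m)) =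
        ((m:ℝ)+2) ^ 2 * s ^ m * (s ^ (m+2) - 1) *
          (((m:ℝ)+2) * (s - 1) * (s ^ (m+2) + 1) - (s ^ (m+2) - 1)) := by ring
    rw [hfact]
    have h1 : s ^ (m+2) - 1 < ((m:ℝ)+2) * (s - 1) * (s ^ (m+2) + 1) := by
      have := key1 (m+2) (by omega) hs
      push_cast at this; convert this using 2 <;> push_cast <;> ring
    have hpos : (0:ℝ) < ((m:ℝ)+2) ^ 2 * s ^ m * (s ^ (m+2) - 1) := by
      have h2 := denomphi_pos m hs
      positivity
    exact mul_pos hpos (by linarith)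

lemma phifun_mono (m : ℕ) : StrictMonoOn (phifun m) (Ioi 1) := by
  apply strictMonoOn_of_deriv_pos (convex_Ioi 1)
  · apply ContinuousOn.div
    · fun_prop
    · fun_prop
    · intro s hs; exact (denomphi_pos m hs).ne'
  · intro s hs
    rw [interior_Ioi] at hs
    have hs : (1:ℝ) < s := hs
    have hs0 : (0:ℝ) < s := by linarith
    have hd := denomphi_pos m hs
    have hnum : HasDerivAt (fun s : ℝ => ((m:ℝ)+2) * (s ^ (m+2) - s ^ (m+1)))
        (((m:ℝ)+2) * (((m:ℝ)+2) * s ^ (m+1) - ((m:ℝ)+1) * s ^ m)) s := by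
      have : HasDerivAt (fun s : ℝ => ((m:ℝ)+2) * (s ^ (m+2) - s ^ (m+1))) _ s := ((hasDerivAt_pow (m+2) s).sub (hasDerivAt_pow (m+1) s)).const_mul ((m:ℝ)+2)
      convert this using 1
      push_cast [Nat.add_sub_cancel]
      ring
    have hden : HasDerivAt (fun s : ℝ => s ^ (m+2) - 1)
        (((m:ℝ)+2) * s ^ (m+1)) s := by
      have : HasDerivAt (fun s : ℝ => s ^ (m+2) - 1) _ s := (hasDerivAt_pow (m+2) s).sub_const 1
      convert this using 1
      push_cast [Nat.add_sub_cancel]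
      ring
    have hdiv := hnum.fun_div hden hd.ne'
    rw [show phifun m = fun s : ℝ => ((m:ℝ)+2) * (s ^ (m+2) - s ^ (m+1)) / (s ^ (m+2) - 1) from rfl,
      hdiv.deriv]
    apply div_pos _ (by positivity)
    have hfact : ((m:ℝ)+2) * (((m:ℝ)+2) * s ^ (m+1) - ((m:ℝ)+1) * s ^ m) * (s ^ (m+2) - 1) -
        ((m:ℝ)+2) * (s ^ (m+2) - s ^ (m+1)) * (((m:ℝ)+2) * s ^ (m+1)) =
        ((m:ℝ)+2) * s ^ m * ((s ^ (m+2) - 1) - ((m:ℝ)+2) * (s - 1)) := by ring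
    rw [hfact]
    have h1 : ((m:ℝ)+2) * (s - 1) < s ^ (m+2) - 1 := by
      have := key2 (m+2) (by omega) hs
      push_cast at this; convert this using 2 <;> push_cast <;> ring
    have hpos : (0:ℝ) < ((m:ℝ)+2) * s ^ m := by positivity
    exact mul_pos hpos (by linarith)

theorem stmt_5 (N : ℕ) (hN : 2 ≤ N) (φ : ℝ → ℝ)
    (hsol : ∀ P : ℝ, 0 < P → φ P ∈ Set.Icc 1 (N : ℝ) ∧
      (1 + (N : ℝ) * P * φ P) ^ (N - 1) = (1 + P * φ P * ((N : ℝ) - φ P)) ^ N)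
    (huniq : ∀ P : ℝ, 0 < P → ∀ ψ : ℝ, ψ ∈ Set.Icc 1 (N : ℝ) →
      (1 + (N : ℝ) * P * ψ) ^ (N - 1) = (1 + P * ψ * ((N : ℝ) - ψ)) ^ N → ψ = φ P) :
    StrictMonoOn φ (Set.Ioi (0 : ℝ)) := by
  clear huniq
  obtain ⟨m, rfl⟩ : ∃ m, N = m + 2 := ⟨N - 2, by omega⟩
  have key : ∀ P : ℝ, 0 < P → ∃ s, 1 < s ∧ φ P = phifun m s ∧ P = Pfun m s := by
    intro P hP
    obtain ⟨⟨hφ1, hφN⟩, heq⟩ := hsol P hP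
    have hφpos : (0:ℝ) < φ P := by linarith
    have hNR : ((m+2 : ℕ) : ℝ) = (m:ℝ) + 2 := by push_cast; ring
    have hxpos : (0:ℝ) < ((m+2:ℕ):ℝ) * P * φ P := by
      rw [hNR]; positivity
    have hb : (1:ℝ) < 1 + ((m+2:ℕ):ℝ) * P * φ P := by linarith
    set s := (1 + ((m+2:ℕ):ℝ) * P * φ P) ^ (((m+2:ℕ) : ℝ))⁻¹ with hsdef
    have hs1 : 1 < s := by
      rw [hsdef]
      rw [Real.one_lt_rpow_iff_of_pos (by linarith)]
      left
      constructor
      · exact hb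
      · rw [hNR]; positivity
    have e1 : s ^ (m+2) = 1 + ((m+2:ℕ):ℝ) * P * φ P :=
      Real.rpow_inv_natCast_pow (by linarith) (by omega)
    have hc : (0:ℝ) ≤ 1 + P * φ P * (((m+2:ℕ):ℝ) - φ P) := by
      have : (0:ℝ) ≤ P * φ P * (((m+2:ℕ):ℝ) - φ P) := by
        apply mul_nonneg (by positivity); linarith
      linarith
    have h1 : (s ^ (m+1)) ^ (m+2) = (1 + P * φ P * (((m+2:ℕ):ℝ) - φ P)) ^ (m+2) := by
      rw [← pow_mul, mul_comm, pow_mul, e1]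
      have hsub : m + 2 - 1 = m + 1 := by omega
      rw [← hsub]
      exact heq
    have e2 : s ^ (m+1) = 1 + P * φ P * (((m+2:ℕ):ℝ) - φ P) := by
      have hmono := pow_left_strictMonoOn₀ (M₀ := ℝ) (n := m+2) (by omega)
      exact hmono.injOn (by show (0:ℝ) ≤ s ^ (m+1); positivity) (by exact hc) h1
    have h3 : s ^ (m+2) - s ^ (m+1) = P * φ P * φ P := by
      rw [e1, e2]; ring
    have h4 : s ^ (m+2) - 1 = ((m:ℝ)+2) * P * φ P := by
      rw [e1, hNR]; ring
    refine ⟨s, hs1, ?_, ?_⟩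
    · rw [phifun, h3, h4]
      field_simp
    · rw [Pfun, h3, h4]
      field_simp
  intro P1 hP1 P2 hP2 h12
  obtain ⟨s1, hs1, hφ1, hP1e⟩ := key P1 hP1
  obtain ⟨s2, hs2, hφ2, hP2e⟩ := key P2 hP2
  have hPlt : Pfun m s1 < Pfun m s2 := by rw [← hP1e, ← hP2e]; exact h12
  have hss : s1 < s2 := by
    by_contra h
    push_neg at h
    rcases h.lt_or_eq with h' | h'
    · exact absurd hPlt (not_lt.mpr (Pfun_mono m hs2 hs1 h').le)
    · rw [h'] at hPlt; exact lt_irrefl _ hPlt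
  rw [hφ1, hφ2]
  exact phifun_mono m hs1 hs2 hss
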